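/- Let Γ be a regular nicely distance-balanced graph with valency k = 3, diameter d = 4 and γ(Γ) = 5. Then Γ is triangle-free, i.e. no two adjacent vertices of Γ have a common neighbour. -/

import Mathlib

open SimpleGraph Finset

/-- `W_{u,v}`: the set of vertices strictly closer to `u` than to `v`. -/
noncomputable def ndbW {V : Type*} [Fintype V] (G : SimpleGraph V) (u v : V) : Finset V :=
  Finset.univ.filter fun x => G.dist x u < G.dist x v

/-- `D^i_j(u,v)`: the set of vertices at distance `i` from `u` and `j` from `v`. -/
noncomputable def ndbD {V : Type*} [Fintype V] (G : SimpleGraph V) (u v : V) (i j : ℕ) : Finset V :=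
  Finset.univ.filter fun x => G.dist x u = i ∧ G.dist x v = j

/-- `G` is nicely distance-balanced with constant `γ`. -/
def IsNDB {V : Type*} [Fintype V] (G : SimpleGraph V) (γ : ℕ) : Prop :=
  ∀ u v : V, G.Adj u v → (ndbW G u v).card = γ ∧ (ndbW G v u).card = γ

/-- `G` has diameter `d`. -/
def HasDiam {V : Type*} [Fintype V] (G : SimpleGraph V) (d : ℕ) : Prop :=
  (∀ u v : V, G.dist u v ≤ d) ∧ ∃ u v : V, G.dist u v = d

set_option linter.unusedSectionVars false
set_option maxHeartbeats 1000000

section Aux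
variable {V : Type*} [Fintype V] [DecidableEq V] {G : SimpleGraph V} [DecidableRel G.Adj]

lemma dist_adj_le (hconn : G.Connected) {x a b : V} (h : G.Adj a b) :
    G.dist x a ≤ G.dist x b + 1 := by
  have := hconn.dist_triangle (u := x) (v := b) (w := a)
  have hb : G.dist b a = 1 := dist_eq_one_iff_adj.mpr h.symm
  omega

lemma exists_parent (hconn : G.Connected) {x v : V} (h : v ≠ x) :
    ∃ y, G.Adj v y ∧ G.dist x y + 1 = G.dist x v := by
  have hpos : 0 < G.dist v x := hconn.pos_dist_of_ne h
  obtain ⟨p, hp⟩ := hconn.exists_walk_length_eq_dist v x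
  cases p with
  | nil => simp at hp hpos
  | cons hadj q =>
    rename_i y
    refine ⟨y, hadj, ?_⟩
    simp only [Walk.length_cons] at hp
    have h1 : G.dist y x ≤ q.length := dist_le q
    have h2 : G.dist v x ≤ G.dist v y + G.dist y x := hconn.dist_triangle
    have h3 : G.dist v y = 1 := dist_eq_one_iff_adj.mpr hadj
    have hc1 : G.dist x y = G.dist y x := dist_comm
    have hc2 : G.dist x v = G.dist v x := dist_comm
    omega

lemma third_nbr (hreg : G.IsRegularOfDegree 3) {u v w : V} (huv : G.Adj u v)
    (huw : G.Adj u w) (hvw : v ≠ w) :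
    ∃ z, G.neighborFinset u = {v, w, z} ∧ z ≠ v ∧ z ≠ w ∧ G.Adj u z := by
  have hcard : (G.neighborFinset u).card = 3 := hreg u
  have hsub : ({v, w} : Finset V) ⊆ G.neighborFinset u := by
    intro t ht
    simp only [mem_insert, mem_singleton] at ht
    rcases ht with rfl | rfl <;> simp [huv, huw]
  have h2 : ({v, w} : Finset V).card = 2 := by
    rw [card_insert_of_notMem (by simp [hvw]), card_singleton]
  have hd : (G.neighborFinset u \ {v, w}).card = 1 := by
    rw [card_sdiff_of_subset hsub, hcard, h2]
  obtain ⟨z, hz⟩ := card_eq_one.mp hd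
  have hzmem : z ∈ G.neighborFinset u \ {v, w} := hz ▸ mem_singleton_self z
  rw [mem_sdiff, mem_neighborFinset, mem_insert, mem_singleton] at hzmem
  push_neg at hzmem
  refine ⟨z, ?_, hzmem.2.1, hzmem.2.2, hzmem.1⟩
  have hc3 : ({v, w, z} : Finset V).card = 3 := by
    rw [card_insert_of_notMem (by simp [hvw, (hzmem.2.1).symm]),
      card_insert_of_notMem (by simp [(hzmem.2.2).symm]), card_singleton]
  refine (Finset.eq_of_subset_of_card_le ?_ (by omega)).symm
  intro t ht
  simp only [mem_insert, mem_singleton] at ht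
  rcases ht with rfl | rfl | rfl
  · exact hsub (by simp)
  · exact hsub (by simp)
  · rw [mem_neighborFinset]; exact hzmem.1

lemma two_nbrs (hreg : G.IsRegularOfDegree 3) {u' u : V} (h : G.Adj u' u) :
    ∃ a1 a2, G.neighborFinset u' = {u, a1, a2} ∧ a1 ≠ a2 ∧ a1 ≠ u ∧ a2 ≠ u ∧
      G.Adj u' a1 ∧ G.Adj u' a2 := by
  have hcard : (G.neighborFinset u').card = 3 := hreg u'
  have hd : (G.neighborFinset u' \ {u}).card = 2 := by
    rw [card_sdiff_of_subset (by simp [h]), hcard, card_singleton]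
  obtain ⟨a1, a2, hne, hs⟩ := card_eq_two.mp hd
  have h1 : a1 ∈ G.neighborFinset u' \ {u} := by rw [hs]; simp
  have h2 : a2 ∈ G.neighborFinset u' \ {u} := by rw [hs]; simp
  rw [mem_sdiff, mem_neighborFinset, mem_singleton] at h1 h2
  refine ⟨a1, a2, ?_, hne, h1.2, h2.2, h1.1, h2.1⟩
  have : ({u, a1, a2} : Finset V).card = 3 := by
    rw [card_insert_of_notMem (by simp [Ne.symm h1.2, Ne.symm h2.2]),
      card_insert_of_notMem (by simp [hne]), card_singleton]
  refine (Finset.eq_of_subset_of_card_le ?_ (by omega)).symm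
  intro t ht
  simp only [mem_insert, mem_singleton] at ht
  rcases ht with rfl | rfl | rfl
  · simpa using h
  · rw [mem_neighborFinset]; exact h1.1
  · rw [mem_neighborFinset]; exact h2.1


lemma ndbW_card (hndb : IsNDB G 5) {u v : V} (h : G.Adj u v) :
    (∑ x : V, if G.dist x u < G.dist x v then 1 else 0) = 5 := by
  have h5 := (hndb u v h).1
  rw [← h5]
  unfold ndbW
  rw [Finset.card_filter]

/-- the number of (vertex, incoming-closer-neighbour) incidences -/
noncomputable def gcnt (G : SimpleGraph V) [DecidableRel G.Adj] (x v : V) : ℕ :=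
  ∑ u ∈ G.neighborFinset v, if G.dist x u < G.dist x v then 1 else 0

lemma gcnt_self (x : V) : gcnt G x x = 0 := by
  unfold gcnt
  apply Finset.sum_eq_zero
  intro u _
  simp [SimpleGraph.dist_self]

lemma gcnt_pos (hconn : G.Connected) {x v : V} (h : v ≠ x) : 1 ≤ gcnt G x v := by
  obtain ⟨y, hy, hd⟩ := exists_parent hconn h
  unfold gcnt
  have : y ∈ G.neighborFinset v := by rwa [mem_neighborFinset]
  calc (1 : ℕ) = if G.dist x y < G.dist x v then 1 else 0 := by
        rw [if_pos]; omega
    _ ≤ _ := Finset.single_le_sum (f := fun u => if G.dist x u < G.dist x v then (1:ℕ) else 0)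
        (by intro i _; positivity) this

lemma sum_gcnt (hreg : G.IsRegularOfDegree 3) (hndb : IsNDB G 5) :
    ∑ x : V, ∑ v : V, gcnt G x v = 15 * Fintype.card V := by
  unfold gcnt
  rw [Finset.sum_comm]
  have : ∀ v : V, ∑ x : V, ∑ u ∈ G.neighborFinset v, (if G.dist x u < G.dist x v then 1 else 0)
      = 15 := by
    intro v
    rw [Finset.sum_comm]
    have : ∀ u ∈ G.neighborFinset v, (∑ x : V, if G.dist x u < G.dist x v then (1:ℕ) else 0) = 5 := by
      intro u hu
      exact ndbW_card hndb ((mem_neighborFinset _ _ _).mp hu).symm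
    rw [Finset.sum_congr rfl this, Finset.sum_const]
    have hdeg : #(G.neighborFinset v) = 3 := hreg v
    rw [hdeg]
    rfl
  rw [Finset.sum_congr rfl (fun v _ => this v), Finset.sum_const, Finset.card_univ]
  ring


/-- if a triangle exists then `card V ≥ 15` -/
lemma card_ge_15 (hconn : G.Connected) (hndb : IsNDB G 5) {u v w : V}
    (huv : G.Adj u v) (huw : G.Adj u w) (hvw : G.Adj v w) : 15 ≤ Fintype.card V := by
  have key : ∀ x : V,
      ((if G.dist x u < G.dist x v then (1:ℕ) else 0) + (if G.dist x v < G.dist x u then 1 else 0))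
      + ((if G.dist x u < G.dist x w then 1 else 0) + (if G.dist x w < G.dist x u then 1 else 0))
      + ((if G.dist x v < G.dist x w then 1 else 0) + (if G.dist x w < G.dist x v then 1 else 0))
      ≤ 2 := by
    intro x
    have h1 := dist_adj_le hconn (x := x) huv
    have h2 := dist_adj_le hconn (x := x) huv.symm
    have h3 := dist_adj_le hconn (x := x) huw
    have h4 := dist_adj_le hconn (x := x) huw.symm
    have h5 := dist_adj_le hconn (x := x) hvw
    have h6 := dist_adj_le hconn (x := x) hvw.symm
    split_ifs <;> omega
  have hsum := Finset.sum_le_sum (fun x (_ : x ∈ (univ : Finset V)) => key x)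
  rw [Finset.sum_const, Finset.card_univ, smul_eq_mul] at hsum
  have e1 := ndbW_card hndb huv
  have e2 := ndbW_card hndb huv.symm
  have e3 := ndbW_card hndb huw
  have e4 := ndbW_card hndb huw.symm
  have e5 := ndbW_card hndb hvw
  have e6 := ndbW_card hndb hvw.symm
  have hsplit : (∑ x : V,
      (((if G.dist x u < G.dist x v then (1:ℕ) else 0) + (if G.dist x v < G.dist x u then 1 else 0))
      + ((if G.dist x u < G.dist x w then 1 else 0) + (if G.dist x w < G.dist x u then 1 else 0))
      + ((if G.dist x v < G.dist x w then 1 else 0) + (if G.dist x w < G.dist x v then 1 else 0))))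
      = 30 := by
    rw [Finset.sum_add_distrib, Finset.sum_add_distrib, Finset.sum_add_distrib,
      Finset.sum_add_distrib, Finset.sum_add_distrib, e1, e2, e3, e4, e5, e6]
    norm_num
  omega


lemma card_even (hreg : G.IsRegularOfDegree 3) : Even (Fintype.card V) := by
  have h := SimpleGraph.sum_degrees_eq_twice_card_edges G
  have h2 : ∑ v : V, G.degree v = 3 * Fintype.card V := by
    rw [Finset.sum_congr rfl (fun v _ => hreg v), Finset.sum_const, Finset.card_univ,
      smul_eq_mul, mul_comm]
  rw [Nat.even_iff]
  omega

lemma card16 (hconn : G.Connected) (hreg : G.IsRegularOfDegree 3) (hndb : IsNDB G 5)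
    (h15 : 15 ≤ Fintype.card V) :
    Fintype.card V = 16 ∧ ∀ x v : V, v ≠ x → gcnt G x v = 1 := by
  have hsum := sum_gcnt hreg hndb
  have hlow : ∀ x : V, Fintype.card V - 1 ≤ ∑ v : V, gcnt G x v := by
    intro x
    have hstep : ∀ v ∈ (univ : Finset V).erase x, 1 ≤ gcnt G x v :=
      fun v hv => gcnt_pos hconn (Finset.mem_erase.mp hv).1
    calc Fintype.card V - 1 = ((univ : Finset V).erase x).card := by
          rw [Finset.card_erase_of_mem (mem_univ x), Finset.card_univ]
      _ = ∑ v ∈ (univ : Finset V).erase x, 1 := by rw [Finset.sum_const, smul_eq_mul, mul_one]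
      _ ≤ ∑ v ∈ (univ : Finset V).erase x, gcnt G x v := Finset.sum_le_sum hstep
      _ ≤ ∑ v : V, gcnt G x v := Finset.sum_le_sum_of_subset (Finset.erase_subset _ _)
  have hle : Fintype.card V ≤ 16 := by
    have h1 : ∑ x : V, (Fintype.card V - 1) ≤ ∑ x : V, ∑ v : V, gcnt G x v :=
      Finset.sum_le_sum (fun x _ => hlow x)
    rw [hsum, Finset.sum_const, Finset.card_univ, smul_eq_mul] at h1
    rw [mul_comm (Fintype.card V)] at h1
    have := Nat.le_of_mul_le_mul_right h1 (by omega : 0 < Fintype.card V)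
    omega
  have heven := card_even (G := G) hreg
  rw [Nat.even_iff] at heven
  have hn : Fintype.card V = 16 := by omega
  have hF : ∀ x : V, ∑ v : V, gcnt G x v = 15 := by
    intro x
    by_contra hne
    have hge : 16 ≤ ∑ v : V, gcnt G x v := by have := hlow x; omega
    have hbig : 241 ≤ ∑ x : V, ∑ v : V, gcnt G x v := by
      rw [← Finset.add_sum_erase _ _ (mem_univ x)]
      have hc : ((univ : Finset V).erase x).card = 15 := by
        rw [Finset.card_erase_of_mem (mem_univ x), Finset.card_univ, hn]
      have hrest : 15 * 15 ≤ ∑ y ∈ (univ : Finset V).erase x, ∑ v : V, gcnt G y v := by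
        calc (15 * 15 : ℕ) = ∑ y ∈ (univ : Finset V).erase x, 15 := by
              rw [Finset.sum_const, hc, smul_eq_mul]
          _ ≤ _ := Finset.sum_le_sum (fun y _ => by have := hlow y; omega)
      omega
    rw [hsum, hn] at hbig
    omega
  refine ⟨hn, fun x v hv => ?_⟩
  have hFx := hF x
  rw [← Finset.add_sum_erase _ _ (mem_univ x), gcnt_self, zero_add] at hFx
  by_contra hne
  have h2 : 2 ≤ gcnt G x v := by have := gcnt_pos hconn hv; omega
  have hvmem : v ∈ (univ : Finset V).erase x := Finset.mem_erase.mpr ⟨hv, mem_univ v⟩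
  have hbig : 16 ≤ ∑ y ∈ (univ : Finset V).erase x, gcnt G x y := by
    rw [← Finset.add_sum_erase _ _ hvmem]
    have hc : (((univ : Finset V).erase x).erase v).card = 14 := by
      rw [Finset.card_erase_of_mem hvmem, Finset.card_erase_of_mem (mem_univ x),
        Finset.card_univ, hn]
    have hrest : 14 ≤ ∑ y ∈ ((univ : Finset V).erase x).erase v, gcnt G x y := by
      calc (14 : ℕ) = ∑ y ∈ ((univ : Finset V).erase x).erase v, 1 := by
            rw [Finset.sum_const, hc, smul_eq_mul, mul_one]
        _ ≤ _ := Finset.sum_le_sum (fun y hy =>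
            gcnt_pos hconn (Finset.mem_erase.mp (Finset.mem_of_mem_erase hy)).1)
    omega
  omega

/-- unique parent property: in our graph each vertex has a unique neighbour
closer to any given root -/
lemma up_unique (hUP : ∀ x v : V, v ≠ x → gcnt G x v = 1) {x v y1 y2 : V} (hvx : v ≠ x)
    (h1 : G.Adj v y1) (h2 : G.Adj v y2) (hd1 : G.dist x y1 < G.dist x v)
    (hd2 : G.dist x y2 < G.dist x v) : y1 = y2 := by
  have hg := hUP x v hvx
  unfold gcnt at hg
  rw [← Finset.card_filter] at hg
  have hm1 : y1 ∈ (G.neighborFinset v).filter (fun u => G.dist x u < G.dist x v) := by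
    rw [Finset.mem_filter, mem_neighborFinset]; exact ⟨h1, hd1⟩
  have hm2 : y2 ∈ (G.neighborFinset v).filter (fun u => G.dist x u < G.dist x v) := by
    rw [Finset.mem_filter, mem_neighborFinset]; exact ⟨h2, hd2⟩
  exact Finset.card_le_one.mp (le_of_eq hg) _ hm1 _ hm2


lemma inter_nbr_card (a : V) (B : Finset V) :
    (G.neighborFinset a ∩ B).card = ∑ b ∈ B, if G.Adj a b then 1 else 0 := by
  rw [← Finset.card_filter]
  congr 1
  ext t
  simp [Finset.mem_filter, and_comm]

/-- double counting of edges between two vertex sets -/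
lemma cross_count (A B : Finset V) :
    ∑ a ∈ A, (G.neighborFinset a ∩ B).card = ∑ b ∈ B, (G.neighborFinset b ∩ A).card := by
  rw [Finset.sum_congr rfl (fun a _ => inter_nbr_card a B),
    Finset.sum_congr rfl (fun b _ => inter_nbr_card b A), Finset.sum_comm]
  apply Finset.sum_congr rfl
  intro b _
  apply Finset.sum_congr rfl
  intro a _
  simp [adj_comm]

/-- handshake: the number of (vertex, neighbour-in-A) incidences within A is even -/
lemma even_sum_adj (A : Finset V) :
    Even (∑ a ∈ A, (G.neighborFinset a ∩ A).card) := by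
  rw [Finset.sum_congr rfl (fun a _ => inter_nbr_card a A)]
  induction A using Finset.induction_on with
  | empty => simp
  | insert a s ha ih =>
    rw [Finset.sum_insert ha]
    have h1 : ∀ x : V, (∑ y ∈ insert a s, if G.Adj x y then (1:ℕ) else 0)
        = (if G.Adj x a then 1 else 0) + ∑ y ∈ s, if G.Adj x y then 1 else 0 :=
      fun x => Finset.sum_insert ha
    rw [h1, Finset.sum_congr rfl (fun x _ => h1 x), Finset.sum_add_distrib]
    have h2 : (if G.Adj a a then (1:ℕ) else 0) = 0 := by simp
    have h3 : (∑ x ∈ s, if G.Adj x a then (1:ℕ) else 0)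
        = ∑ y ∈ s, if G.Adj a y then 1 else 0 := by
      apply Finset.sum_congr rfl; intro x _; simp [adj_comm]
    rw [h2, h3]
    obtain ⟨m, hm⟩ := ih
    exact ⟨(∑ y ∈ s, if G.Adj a y then 1 else 0) + m, by omega⟩

lemma dist_two (hconn : G.Connected) {x y c : V} (hne : x ≠ y) (hnadj : ¬ G.Adj x y)
    (h1 : G.Adj x c) (h2 : G.Adj c y) : G.dist x y = 2 := by
  have hle : G.dist x y ≤ 2 := by
    have := hconn.dist_triangle (u := x) (v := c) (w := y)
    rw [dist_eq_one_iff_adj.mpr h1, dist_eq_one_iff_adj.mpr h2] at this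
    omega
  have h0 : G.dist x y ≠ 0 := by
    intro h0; exact hne ((hconn.dist_eq_zero_iff).mp h0)
  have h1' : G.dist x y ≠ 1 := by
    rw [ne_eq, dist_eq_one_iff_adj]; exact hnadj
  omega

/-- no two adjacent vertices of a triangle have a second common neighbour -/
lemma common_nbr (hconn : G.Connected) (hreg : G.IsRegularOfDegree 3)
    (hcard : Fintype.card V = 16) (hUP : ∀ x v : V, v ≠ x → gcnt G x v = 1)
    {a b c z : V} (hab : G.Adj a b) (hac : G.Adj a c) (hbc : G.Adj b c)
    (hza : G.Adj z a) (hzb : G.Adj z b) : z = c := by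
  by_contra hzc
  by_cases hadj : G.Adj z c
  · -- K₄ situation: the component has only 4 vertices, contradicting card = 16
    have nbr : ∀ p q r s : V, G.Adj p q → G.Adj p r → G.Adj p s → q ≠ r → q ≠ s → r ≠ s →
        G.neighborFinset p = {q, r, s} := by
      intro p q r s h1 h2 h3 hqr hqs hrs
      have hsub : ({q, r, s} : Finset V) ⊆ G.neighborFinset p := by
        intro t ht
        simp only [Finset.mem_insert, Finset.mem_singleton] at ht
        rcases ht with rfl | rfl | rfl <;> simp [h1, h2, h3]
      have hc3 : ({q, r, s} : Finset V).card = 3 := by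
        rw [Finset.card_insert_of_notMem (by simp [hqr, hqs]),
          Finset.card_insert_of_notMem (by simp [hrs]), Finset.card_singleton]
      refine (Finset.eq_of_subset_of_card_le hsub ?_).symm
      have hd : (G.neighborFinset p).card = 3 := hreg p
      omega
    have hNa : G.neighborFinset a = {b, c, z} := nbr a b c z hab hac hza.symm hbc.ne hzb.ne.symm (Ne.symm hzc)
    have hNb : G.neighborFinset b = {a, c, z} := nbr b a c z hab.symm hbc hzb.symm hac.ne hza.ne.symm (Ne.symm hzc)
    have hNc : G.neighborFinset c = {a, b, z} := nbr c a b z hac.symm hbc.symm hadj.symm hab.ne hza.ne.symm hzb.ne.symm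
    have hNz : G.neighborFinset z = {a, b, c} := nbr z a b c hza hzb hadj hab.ne hac.ne hbc.ne
    have key : ∀ k : ℕ, ∀ x : V, G.dist a x = k → x ∈ ({a, b, c, z} : Finset V) := by
      intro k
      induction k using Nat.strong_induction_on with
      | _ k IH =>
        intro x hx
        rcases Nat.eq_zero_or_pos k with rfl | hk
        · have hax : a = x := (hconn.dist_eq_zero_iff).mp hx
          simp [← hax]
        · have hxa : x ≠ a := by
            intro h; subst h; rw [SimpleGraph.dist_self] at hx; omega
          obtain ⟨y, hy, hd⟩ := exists_parent hconn hxa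
          have hyk : G.dist a y = k - 1 := by omega
          have hymem := IH (k-1) (by omega) y hyk
          have hxny : x ∈ G.neighborFinset y := by rw [mem_neighborFinset]; exact hy.symm
          simp only [Finset.mem_insert, Finset.mem_singleton] at hymem
          rcases hymem with rfl | rfl | rfl | rfl
          · rw [hNa] at hxny; simp only [Finset.mem_insert, Finset.mem_singleton] at hxny
            simp [hxny]
          · rw [hNb] at hxny; simp only [Finset.mem_insert, Finset.mem_singleton] at hxny
            rcases hxny with rfl | rfl | rfl <;> simp
          · rw [hNc] at hxny; simp only [Finset.mem_insert, Finset.mem_singleton] at hxny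
            rcases hxny with rfl | rfl | rfl <;> simp
          · rw [hNz] at hxny; simp only [Finset.mem_insert, Finset.mem_singleton] at hxny
            rcases hxny with rfl | rfl | rfl <;> simp
    have hsub : (univ : Finset V) ⊆ {a, b, c, z} := fun x _ => key (G.dist a x) x rfl
    have : Fintype.card V ≤ 4 := by
      calc Fintype.card V = (univ : Finset V).card := (Finset.card_univ).symm
        _ ≤ ({a, b, c, z} : Finset V).card := Finset.card_le_card hsub
        _ ≤ 4 := by
          apply le_trans (Finset.card_insert_le _ _)
          have := le_trans (Finset.card_insert_le c {z}) (by simp : ({z} : Finset V).card + 1 ≤ 2)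
          have := Finset.card_insert_le b ({c, z} : Finset V)
          omega
    omega
  · -- z and c are two closer neighbours of ... contradiction with unique parent
    have hd2 : G.dist c z = 2 := dist_two hconn (Ne.symm hzc) (fun h => hadj (h.symm)) hac.symm hza.symm
    have := up_unique hUP (x := c) (v := z) (y1 := a) (y2 := b)
      (by intro h; subst h; exact hzc rfl) hza hzb
      (by rw [hd2, dist_eq_one_iff_adj.mpr hac.symm]; omega)
      (by rw [hd2, dist_eq_one_iff_adj.mpr hbc.symm]; omega)
    exact hab.ne this



/-- the second-neighbourhood structure around a triangle vertex -/
lemma L2char (hconn : G.Connected) (hreg : G.IsRegularOfDegree 3)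
    (hcard : Fintype.card V = 16) (hUP : ∀ x v : V, v ≠ x → gcnt G x v = 1)
    {u v w : V} (huv : G.Adj u v) (huw : G.Adj u w) (hvw : G.Adj v w) :
    ∃ u' v' w' a1 a2 : V,
      G.neighborFinset u = {v, w, u'} ∧ G.Adj u u' ∧ G.Adj u' a1 ∧ G.Adj u' a2 ∧
      G.dist u v' = 2 ∧ G.dist u w' = 2 ∧ G.dist u a1 = 2 ∧ G.dist u a2 = 2 ∧
      G.dist v v' = 1 ∧ G.dist v w' = 2 ∧
      a1 ≠ a2 ∧ v' ≠ w' ∧ v' ≠ a1 ∧ v' ≠ a2 ∧ w' ≠ a1 ∧ w' ≠ a2 ∧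
      (∀ x : V, G.dist u x = 2 → x = v' ∨ x = w' ∨ x = a1 ∨ x = a2) := by
  obtain ⟨u', hNu, hu'v, hu'w, huu'⟩ := third_nbr hreg huv huw hvw.ne
  obtain ⟨v', hNv, hv'u, hv'w, hvv'⟩ := third_nbr hreg huv.symm hvw huw.ne
  obtain ⟨w', hNw, hw'u, hw'v, hww'⟩ := third_nbr hreg huw.symm hvw.symm huv.ne
  obtain ⟨a1, a2, hNu', ha12, ha1u, ha2u, hu'a1, hu'a2⟩ := two_nbrs hreg huu'.symm
  -- u' is not adjacent to v nor w, etc.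
  have hu'nv : ¬ G.Adj u' v := fun h =>
    hu'w (common_nbr hconn hreg hcard hUP huv huw hvw huu'.symm h)
  have hu'nw : ¬ G.Adj u' w := fun h =>
    hu'v (common_nbr hconn hreg hcard hUP huw huv hvw.symm huu'.symm h)
  have hv'nu : ¬ G.Adj v' u := fun h =>
    hv'w (common_nbr hconn hreg hcard hUP huv.symm hvw huw hvv'.symm h)
  have hw'nu : ¬ G.Adj w' u := fun h =>
    hw'v (common_nbr hconn hreg hcard hUP huw.symm hvw.symm huv hww'.symm h)
  have hw'nv : ¬ G.Adj w' v := fun h =>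
    hw'u (common_nbr hconn hreg hcard hUP hvw.symm huw.symm huv.symm hww'.symm h)
  -- distances from u and v to the second-level vertices
  have hdv' : G.dist u v' = 2 :=
    dist_two hconn (Ne.symm hv'u) (fun h => hv'nu h.symm) huv hvv'
  have hdw' : G.dist u w' = 2 :=
    dist_two hconn (Ne.symm hw'u) (fun h => hw'nu h.symm) huw hww'
  have huna : ∀ t : V, G.Adj u' t → ¬ G.Adj u t := by
    intro t ht h
    have : t ∈ G.neighborFinset u := by rwa [mem_neighborFinset]
    rw [hNu] at this
    simp only [Finset.mem_insert, Finset.mem_singleton] at this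
    rcases this with rfl | rfl | rfl
    · exact hu'nv ht
    · exact hu'nw ht
    · exact ht.ne rfl
  have hda1 : G.dist u a1 = 2 :=
    dist_two hconn (Ne.symm ha1u) (huna a1 hu'a1) huu' hu'a1
  have hda2 : G.dist u a2 = 2 :=
    dist_two hconn (Ne.symm ha2u) (huna a2 hu'a2) huu' hu'a2
  have hdvv' : G.dist v v' = 1 := dist_eq_one_iff_adj.mpr hvv'
  have hdvw' : G.dist v w' = 2 :=
    dist_two hconn (Ne.symm hw'v) (fun h => hw'nv h.symm) hvw hww'
  -- all second-level vertices are distinct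
  have hv'w' : v' ≠ w' := fun h => hw'nv (h ▸ hvv').symm
  have hv'a : ∀ t : V, G.Adj u' t → v' ≠ t := by
    intro t ht h
    subst h
    have := up_unique hUP (x := u) (v := v') (y1 := v) (y2 := u') hv'u hvv'.symm ht.symm
      (by rw [hdv', dist_eq_one_iff_adj.mpr huv]; omega)
      (by rw [hdv', dist_eq_one_iff_adj.mpr huu']; omega)
    exact hu'v this.symm
  have hw'a : ∀ t : V, G.Adj u' t → w' ≠ t := by
    intro t ht h
    subst h
    have := up_unique hUP (x := u) (v := w') (y1 := w) (y2 := u') hw'u hww'.symm ht.symm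
      (by rw [hdw', dist_eq_one_iff_adj.mpr huw]; omega)
      (by rw [hdw', dist_eq_one_iff_adj.mpr huu']; omega)
    exact hu'w this.symm
  refine ⟨u', v', w', a1, a2, hNu, huu', hu'a1, hu'a2, hdv', hdw', hda1, hda2, hdvv', hdvw',
    ha12, hv'w', hv'a a1 hu'a1, hv'a a2 hu'a2, hw'a a1 hu'a1, hw'a a2 hu'a2, ?_⟩
  -- characterisation of the second level
  intro x hx
  have hxu : x ≠ u := by intro h; subst h; rw [SimpleGraph.dist_self] at hx; omega
  obtain ⟨y, hy, hd⟩ := exists_parent hconn hxu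
  have hyu : G.Adj u y := dist_eq_one_iff_adj.mp (by omega)
  have hymem : y ∈ G.neighborFinset u := by rwa [mem_neighborFinset]
  rw [hNu] at hymem
  simp only [Finset.mem_insert, Finset.mem_singleton] at hymem
  have hxny : x ∈ G.neighborFinset y := by rw [mem_neighborFinset]; exact hy.symm
  rcases hymem with rfl | rfl | rfl
  · rw [hNv] at hxny
    simp only [Finset.mem_insert, Finset.mem_singleton] at hxny
    rcases hxny with rfl | rfl | rfl
    · exact absurd rfl hxu
    · rw [dist_eq_one_iff_adj.mpr huw] at hx; omega
    · exact Or.inl rfl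
  · rw [hNw] at hxny
    simp only [Finset.mem_insert, Finset.mem_singleton] at hxny
    rcases hxny with rfl | rfl | rfl
    · exact absurd rfl hxu
    · rw [dist_eq_one_iff_adj.mpr huv] at hx; omega
    · exact Or.inr (Or.inl rfl)
  · rw [hNu'] at hxny
    simp only [Finset.mem_insert, Finset.mem_singleton] at hxny
    rcases hxny with rfl | rfl | rfl
    · exact absurd rfl hxu
    · exact Or.inr (Or.inr (Or.inl rfl))
    · exact Or.inr (Or.inr (Or.inr rfl))


end Aux

/-- BFS level sets -/
noncomputable def lvl {V : Type*} [Fintype V] (G : SimpleGraph V) (u : V) (i : ℕ) : Finset V :=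
  Finset.univ.filter fun x => G.dist u x = i

section Aux2
variable {V : Type*} [Fintype V] [DecidableEq V] {G : SimpleGraph V} [DecidableRel G.Adj]

lemma mem_lvl {u x : V} {i : ℕ} : x ∈ lvl G u i ↔ G.dist u x = i := by simp [lvl]

lemma ecc3 (hconn : G.Connected) (hreg : G.IsRegularOfDegree 3)
    (hd4 : ∀ x y : V, G.dist x y ≤ 4) (hcard : Fintype.card V = 16)
    (hUP : ∀ x v : V, v ≠ x → gcnt G x v = 1)
    {u v w : V} (huv : G.Adj u v) (huw : G.Adj u w) (hvw : G.Adj v w) :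
    ∀ x : V, G.dist u x ≤ 3 := by
  obtain ⟨u', v', w', a1, a2, hNu, huu', hu'a1, hu'a2, hdv', hdw', hda1, hda2, hdvv', hdvw',
    ha12, hv'w', hv'a1, hv'a2, hw'a1, hw'a2, hchar⟩ :=
    L2char hconn hreg hcard hUP huv huw hvw
  -- each vertex at positive distance has a unique parent
  have hpar : ∀ (k : ℕ) (x : V), G.dist u x = k + 1 →
      (G.neighborFinset x ∩ lvl G u k).card = 1 := by
    intro k x hx
    have hxu : x ≠ u := by
      intro h; subst h; rw [SimpleGraph.dist_self] at hx; omega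
    obtain ⟨y, hy, hd⟩ := exists_parent hconn hxu
    rw [Finset.card_eq_one]
    refine ⟨y, ?_⟩
    ext t
    simp only [Finset.mem_inter, mem_neighborFinset, mem_lvl, Finset.mem_singleton]
    constructor
    · rintro ⟨ht1, ht2⟩
      exact up_unique hUP hxu ht1 hy (by omega) (by omega)
    · rintro rfl
      exact ⟨hy, by omega⟩
  -- the neighbours of a vertex at distance k+1 in levels k+1 and k+2
  have hsplit : ∀ (k : ℕ) (x : V), G.dist u x = k + 1 →
      (G.neighborFinset x ∩ lvl G u (k+1)).card + (G.neighborFinset x ∩ lvl G u (k+2)).card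
        = 2 := by
    intro k x hx
    have hdeg : (G.neighborFinset x).card = 3 := hreg x
    have hun : G.neighborFinset x = (G.neighborFinset x ∩ lvl G u k) ∪
        ((G.neighborFinset x ∩ lvl G u (k+1)) ∪ (G.neighborFinset x ∩ lvl G u (k+2))) := by
      ext t
      simp only [Finset.mem_union, Finset.mem_inter, mem_neighborFinset, mem_lvl]
      constructor
      · intro ht
        have h1 : G.dist u t ≤ G.dist u x + 1 := dist_adj_le hconn ht.symm
        have h2 : G.dist u x ≤ G.dist u t + 1 := dist_adj_le hconn ht
        have htri : G.dist u t = k ∨ G.dist u t = k + 1 ∨ G.dist u t = k + 2 := by omega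
        rcases htri with h | h | h
        · exact Or.inl ⟨ht, h⟩
        · exact Or.inr (Or.inl ⟨ht, h⟩)
        · exact Or.inr (Or.inr ⟨ht, h⟩)
      · rintro (⟨h, _⟩ | ⟨h, _⟩ | ⟨h, _⟩) <;> exact h
    have hd1 : Disjoint (G.neighborFinset x ∩ lvl G u k)
        ((G.neighborFinset x ∩ lvl G u (k+1)) ∪ (G.neighborFinset x ∩ lvl G u (k+2))) := by
      rw [Finset.disjoint_left]
      intro t ht1 ht2
      rw [Finset.mem_inter, mem_lvl] at ht1
      rw [Finset.mem_union, Finset.mem_inter, Finset.mem_inter, mem_lvl, mem_lvl] at ht2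
      omega
    have hd2 : Disjoint (G.neighborFinset x ∩ lvl G u (k+1))
        (G.neighborFinset x ∩ lvl G u (k+2)) := by
      rw [Finset.disjoint_left]
      intro t ht1 ht2
      rw [Finset.mem_inter, mem_lvl] at ht1
      rw [Finset.mem_inter, mem_lvl] at ht2
      omega
    rw [hun, Finset.card_union_of_disjoint hd1, Finset.card_union_of_disjoint hd2,
      hpar k x hx] at hdeg
    omega
  -- cross counts
  have hcross23 : (lvl G u 3).card = ∑ y ∈ lvl G u 2, (G.neighborFinset y ∩ lvl G u 3).card := by
    rw [← cross_count (lvl G u 3) (lvl G u 2)]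
    rw [Finset.sum_congr rfl (fun x hx => hpar 2 x (mem_lvl.mp hx)), Finset.sum_const,
      smul_eq_mul, mul_one]
  have hcross34 : (lvl G u 4).card = ∑ z ∈ lvl G u 3, (G.neighborFinset z ∩ lvl G u 4).card := by
    rw [← cross_count (lvl G u 4) (lvl G u 3)]
    rw [Finset.sum_congr rfl (fun x hx => hpar 3 x (mem_lvl.mp hx)), Finset.sum_const,
      smul_eq_mul, mul_one]
  -- sums over levels 2 and 3
  have hsum2 : (∑ y ∈ lvl G u 2, (G.neighborFinset y ∩ lvl G u 2).card) + (lvl G u 3).card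
      = 2 * (lvl G u 2).card := by
    rw [hcross23, ← Finset.sum_add_distrib, Finset.sum_congr rfl
      (fun y hy => hsplit 1 y (mem_lvl.mp hy)), Finset.sum_const, smul_eq_mul, mul_comm]
  have hsum3 : (∑ z ∈ lvl G u 3, (G.neighborFinset z ∩ lvl G u 3).card) + (lvl G u 4).card
      = 2 * (lvl G u 3).card := by
    rw [hcross34, ← Finset.sum_add_distrib, Finset.sum_congr rfl
      (fun z hz => hsplit 2 z (mem_lvl.mp hz)), Finset.sum_const, smul_eq_mul, mul_comm]
  -- vertices in level 4 have exactly two neighbours in level 4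
  have hL4nbr : ∀ t ∈ lvl G u 4, (G.neighborFinset t ∩ lvl G u 4).card = 2 := by
    intro t ht
    have h5 : G.neighborFinset t ∩ lvl G u 5 = ∅ := by
      ext r
      simp only [Finset.mem_inter, mem_lvl, Finset.notMem_empty, iff_false, not_and]
      intro _
      have := hd4 u r
      omega
    have := hsplit 3 t (mem_lvl.mp ht)
    rw [h5] at this
    simp at this
    exact this
  -- cards of the low levels
  have hc0 : (lvl G u 0).card = 1 := by
    have : lvl G u 0 = {u} := by
      ext x
      rw [mem_lvl, Finset.mem_singleton]
      constructor
      · intro h; exact ((hconn.dist_eq_zero_iff).mp h).symm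
      · rintro rfl; exact SimpleGraph.dist_self
    rw [this, Finset.card_singleton]
  have hc1 : (lvl G u 1).card = 3 := by
    have : lvl G u 1 = G.neighborFinset u := by
      ext x
      rw [mem_lvl, mem_neighborFinset, dist_eq_one_iff_adj]
    rw [this]; exact hreg u
  have hc2 : (lvl G u 2).card = 4 := by
    have hL2 : lvl G u 2 = {v', w', a1, a2} := by
      ext x
      rw [mem_lvl]
      constructor
      · intro h
        rcases hchar x h with rfl | rfl | rfl | rfl <;> simp
      · intro h
        simp only [Finset.mem_insert, Finset.mem_singleton] at h
        rcases h with rfl | rfl | rfl | rfl <;> assumption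
    rw [hL2]
    rw [Finset.card_insert_of_notMem (by simp [hv'w', hv'a1, hv'a2]),
      Finset.card_insert_of_notMem (by simp [hw'a1, hw'a2]),
      Finset.card_insert_of_notMem (by simp [ha12]), Finset.card_singleton]
  -- total count
  have htot : (lvl G u 0).card + (lvl G u 1).card + (lvl G u 2).card + (lvl G u 3).card
      + (lvl G u 4).card = 16 := by
    have H : ∀ x ∈ (univ : Finset V), G.dist u x ∈ Finset.range 5 := by
      intro x _
      rw [Finset.mem_range]
      have := hd4 u x
      omega
    have := Finset.card_eq_sum_card_fiberwise H
    rw [Finset.card_univ, hcard] at this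
    rw [Finset.sum_range_succ, Finset.sum_range_succ, Finset.sum_range_succ,
      Finset.sum_range_succ, Finset.sum_range_one] at this
    exact this.symm ▸ rfl
  -- parity
  obtain ⟨m, hm⟩ := even_sum_adj (G := G) (lvl G u 2)
  have hn4 : (lvl G u 4).card = 0 ∨ (lvl G u 4).card = 2 ∨ (lvl G u 4).card = 4 := by omega
  have hL4empty : (lvl G u 4).card = 0 := by
    rcases hn4 with h | h | h
    · exact h
    · -- two vertices in level 4, impossible
      exfalso
      obtain ⟨t, s, hts, hset⟩ := Finset.card_eq_two.mp h
      have ht : t ∈ lvl G u 4 := by rw [hset]; simp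
      have h2 := hL4nbr t ht
      have hsub : G.neighborFinset t ∩ lvl G u 4 ⊆ {s} := by
        intro r hr
        rw [Finset.mem_inter, mem_neighborFinset] at hr
        have : r ∈ lvl G u 4 := hr.2
        rw [hset] at this
        simp only [Finset.mem_insert, Finset.mem_singleton] at this
        rcases this with rfl | rfl
        · exact absurd rfl hr.1.ne
        · simp
      have := Finset.card_le_card hsub
      rw [h2, Finset.card_singleton] at this
      omega
    · -- four vertices in level 4: an induced 4‑cycle, contradiction with unique parents
      exfalso
      have hpos : 0 < (lvl G u 4).card := by omega
      obtain ⟨t, ht⟩ := Finset.card_pos.mp hpos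
      obtain ⟨x, y, hxy, hset⟩ := Finset.card_eq_two.mp (hL4nbr t ht)
      have hx : x ∈ G.neighborFinset t ∩ lvl G u 4 := by rw [hset]; simp
      have hy : y ∈ G.neighborFinset t ∩ lvl G u 4 := by rw [hset]; simp
      rw [Finset.mem_inter, mem_neighborFinset] at hx hy
      have htx : t ≠ x := hx.1.ne
      have hty : t ≠ y := hy.1.ne
      -- the fourth vertex s
      have hsub3 : ({t, x, y} : Finset V) ⊆ lvl G u 4 := by
        intro r hr
        simp only [Finset.mem_insert, Finset.mem_singleton] at hr
        rcases hr with rfl | rfl | rfl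
        · exact ht
        · exact hx.2
        · exact hy.2
      have hc3 : ({t, x, y} : Finset V).card = 3 := by
        rw [Finset.card_insert_of_notMem (by simp [htx, hty]),
          Finset.card_insert_of_notMem (by simp [hxy]), Finset.card_singleton]
      have hds : (lvl G u 4 \ {t, x, y}).card = 1 := by
        rw [Finset.card_sdiff_of_subset hsub3, h, hc3]
      obtain ⟨s, hs⟩ := Finset.card_eq_one.mp hds
      have hsmem : s ∈ lvl G u 4 \ {t, x, y} := by rw [hs]; simp
      rw [Finset.mem_sdiff] at hsmem
      have hsL4 : s ∈ lvl G u 4 := hsmem.1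
      have hsne : s ≠ t ∧ s ≠ x ∧ s ≠ y := by
        have := hsmem.2
        simp only [Finset.mem_insert, Finset.mem_singleton] at this
        push_neg at this
        exact this
      -- L4 = {t, x, y, s}
      have hL4eq : lvl G u 4 = {t, x, y, s} := by
        refine (Finset.eq_of_subset_of_card_le ?_ ?_).symm
        · intro r hr
          simp only [Finset.mem_insert, Finset.mem_singleton] at hr
          rcases hr with rfl | rfl | rfl | rfl
          · exact ht
          · exact hx.2
          · exact hy.2
          · exact hsL4
        · rw [h]
          rw [Finset.card_insert_of_notMem (by simp [htx, hty, Ne.symm hsne.1]),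
            Finset.card_insert_of_notMem (by simp [hxy, Ne.symm hsne.2.1]),
            Finset.card_insert_of_notMem (by simp [Ne.symm hsne.2.2]), Finset.card_singleton]
      -- t and s are not adjacent
      have hnts : ¬ G.Adj t s := by
        intro hadj
        have : s ∈ G.neighborFinset t ∩ lvl G u 4 := by
          rw [Finset.mem_inter, mem_neighborFinset]; exact ⟨hadj, hsL4⟩
        rw [hset] at this
        simp only [Finset.mem_insert, Finset.mem_singleton] at this
        rcases this with rfl | rfl
        · exact hsne.2.1 rfl
        · exact hsne.2.2 rfl
      -- the neighbours of s in level 4 are exactly x and y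
      have hNs : G.neighborFinset s ∩ lvl G u 4 = {x, y} := by
        refine Finset.eq_of_subset_of_card_le ?_ ?_
        · intro r hr
          rw [Finset.mem_inter, mem_neighborFinset] at hr
          have hrL4 : r ∈ lvl G u 4 := hr.2
          rw [hL4eq] at hrL4
          simp only [Finset.mem_insert, Finset.mem_singleton] at hrL4
          rcases hrL4 with rfl | rfl | rfl | rfl
          · exact absurd hr.1.symm hnts
          · simp
          · simp
          · exact absurd rfl hr.1.ne
        · rw [hL4nbr s hsL4]
          rw [Finset.card_insert_of_notMem (by simp [hxy]), Finset.card_singleton]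
      have hsx : G.Adj s x := by
        have : x ∈ G.neighborFinset s ∩ lvl G u 4 := by rw [hNs]; simp
        rw [Finset.mem_inter, mem_neighborFinset] at this
        exact this.1
      have hsy : G.Adj s y := by
        have : y ∈ G.neighborFinset s ∩ lvl G u 4 := by rw [hNs]; simp
        rw [Finset.mem_inter, mem_neighborFinset] at this
        exact this.1
      have hdts : G.dist t s = 2 := dist_two hconn (fun hh => hsne.1 hh.symm) hnts hx.1 hsx.symm
      have := up_unique hUP (x := t) (v := s) (y1 := x) (y2 := y) hsne.1 hsx hsy
        (by rw [hdts, dist_eq_one_iff_adj.mpr hx.1]; omega)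
        (by rw [hdts, dist_eq_one_iff_adj.mpr hy.1]; omega)
      exact hxy this
  intro x
  have hle := hd4 u x
  by_contra hgt
  have hx4 : G.dist u x = 4 := by omega
  have : x ∈ lvl G u 4 := mem_lvl.mpr hx4
  rw [Finset.card_eq_zero.mp hL4empty] at this
  exact absurd this (Finset.notMem_empty x)


lemma no_triangle (hconn : G.Connected) (hreg : G.IsRegularOfDegree 3)
    (hd4 : ∀ x y : V, G.dist x y ≤ 4) (hndb : IsNDB G 5)
    {u v w : V} (huv : G.Adj u v) (huw : G.Adj u w) (hvw : G.Adj v w) : False := by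
  have h15 := card_ge_15 hconn hndb huv huw hvw
  obtain ⟨hcard, hUP⟩ := card16 hconn hreg hndb h15
  have hv3 : ∀ x : V, G.dist v x ≤ 3 := ecc3 hconn hreg hd4 hcard hUP huv.symm hvw huw
  obtain ⟨u', v', w', a1, a2, hNu, huu', hu'a1, hu'a2, hdv', hdw', hda1, hda2, hdvv', hdvw',
    ha12, hv'w', hv'a1, hv'a2, hw'a1, hw'a2, hchar⟩ :=
    L2char hconn hreg hcard hUP huv huw hvw
  have hWsub : ndbW G u v ⊆ {u, u', a1, a2} := by
    intro x hx
    have hx' : G.dist x u < G.dist x v := by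
      simp only [ndbW, Finset.mem_filter] at hx
      exact hx.2
    have h3 : G.dist x v ≤ 3 := by rw [SimpleGraph.dist_comm]; exact hv3 x
    have hstep : G.dist x v ≤ G.dist x u + 1 := dist_adj_le hconn huv.symm
    have hxu2 : G.dist x u ≤ 2 := by omega
    have hxv : G.dist x v = G.dist x u + 1 := by omega
    simp only [Finset.mem_insert, Finset.mem_singleton]
    have hcases : G.dist x u = 0 ∨ G.dist x u = 1 ∨ G.dist x u = 2 := by omega
    rcases hcases with h0 | h1 | h2
    · left
      exact (hconn.dist_eq_zero_iff).mp h0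
    · -- x is a neighbour of u at distance 2 from v, so x = u'
      have hadj : G.Adj u x := (dist_eq_one_iff_adj.mp h1).symm
      have : x ∈ G.neighborFinset u := by rwa [mem_neighborFinset]
      rw [hNu] at this
      simp only [Finset.mem_insert, Finset.mem_singleton] at this
      rcases this with rfl | rfl | rfl
      · rw [SimpleGraph.dist_self] at hxv; omega
      · rw [dist_eq_one_iff_adj.mpr hvw.symm] at hxv; omega
      · right; left; rfl
    · -- x is at distance 2 from u and 3 from v
      have hx2 : G.dist u x = 2 := by rw [SimpleGraph.dist_comm]; exact h2
      have hxv3 : G.dist x v = 3 := by omega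
      rcases hchar x hx2 with rfl | rfl | rfl | rfl
      · rw [SimpleGraph.dist_comm, hdvv'] at hxv3; omega
      · rw [SimpleGraph.dist_comm, hdvw'] at hxv3; omega
      · right; right; left; rfl
      · right; right; right; rfl
  have h5 : (ndbW G u v).card = 5 := (hndb u v huv).1
  have hle := Finset.card_le_card hWsub
  have hle4 : ({u, u', a1, a2} : Finset V).card ≤ 4 := by
    apply le_trans (Finset.card_insert_le _ _)
    have h1 := Finset.card_insert_le u' ({a1, a2} : Finset V)
    have h2 := Finset.card_insert_le a1 ({a2} : Finset V)
    have h3 : ({a2} : Finset V).card = 1 := Finset.card_singleton a2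
    omega
  omega

end Aux2


/-- A regular NDB graph with valency `3`, diameter `4` and `γ = 5`
is triangle-free: no two adjacent vertices have a common neighbour. -/
theorem stmt_9 {V : Type*} [Fintype V] (G : SimpleGraph V) [DecidableRel G.Adj]
    (hconn : G.Connected) (hreg : G.IsRegularOfDegree 3)
    (hdiam : HasDiam G 4) (hndb : IsNDB G 5) :
    ∀ u v : V, G.Adj u v → ∀ w : V, ¬ (G.Adj u w ∧ G.Adj v w) := by
  intro u v huv w hw
  letI : DecidableEq V := Classical.decEq V
  exact no_triangle hconn hreg hdiam.1 hndb huv hw.1 hw.2
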